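/- Let X be a hyperline sequence of rank 2 over E with period length 2k, realized as a cyclic sequence of atoms X⁰,...,X^{2k-1} with X^{a+k} = -X^a. Define χ([x₁,x₂]) = +1 if X induces the cyclic order (x₁,x₂,x̄₁,x̄₂), χ([x₁,x₂]) = -1 if it induces (x₂,x₁,x̄₂,x̄₁), and χ([x₁,x₂]) = 0 if x₁* and x₂* are incident to a common atom. Then χ satisfies chirotope axioms (C1)-(C4) of rank 2. -/

import Mathlib

/-- The bar involution on signed indices: `(e, b) ↦ (e, ¬b)`. -/
def bar {α : Type*} (x : α × Bool) : α × Bool := (x.1, !x.2)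

/-- A chirotope of rank `r` over `α`: a map from `r`-tuples of signed indices
(oriented `(r-1)`-simplices) to `{-1,0,+1}` satisfying axioms (C1)–(C4). -/
structure IsChirotope (r : ℕ) (α : Type*) (χ : (Fin r → α × Bool) → ℤ) : Prop where
  rpos : 0 < r
  values : ∀ σ : Fin r → α × Bool, χ σ = -1 ∨ χ σ = 0 ∨ χ σ = 1
  degenerate : ∀ σ : Fin r → α × Bool,
      ¬ Function.Injective (fun i => (σ i).1) → χ σ = 0
  c1 : ∀ e : α, ∃ τ : Fin r → α, (∃ i, τ i = e) ∧ χ (fun i => (τ i, true)) ≠ 0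
  c2neg : ∀ (σ : Fin r → α × Bool) (i : Fin r), i.val = r - 1 →
      χ (Function.update σ i (bar (σ i))) = - χ σ
  c2swap : ∀ (σ : Fin r → α × Bool) (i j : Fin r), j.val = i.val + 1 →
      χ (fun m => if m = i then bar (σ j) else if m = j then σ i else σ m) = χ σ
  c3 : ∀ σ τ : Fin r → α × Bool, χ σ ≠ 0 → χ τ ≠ 0 →
      ∃ i, χ (Function.update σ ⟨r - 1, Nat.sub_lt rpos one_pos⟩ (τ i)) ≠ 0
  c4 : ∀ (σ : Fin r → α × Bool) (y₁ y₂ : α × Bool),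
      0 ≤ χ (Function.update σ ⟨r - 2, Nat.sub_lt rpos two_pos⟩ y₁) *
          χ (Function.update σ ⟨r - 1, Nat.sub_lt rpos one_pos⟩ y₂) →
      0 ≤ χ (Function.update σ ⟨r - 2, Nat.sub_lt rpos two_pos⟩ y₂) *
          χ (Function.update σ ⟨r - 1, Nat.sub_lt rpos one_pos⟩ (bar y₁)) →
      0 ≤ χ σ *
          χ (Function.update (Function.update σ ⟨r - 2, Nat.sub_lt rpos two_pos⟩ y₁)
              ⟨r - 1, Nat.sub_lt rpos one_pos⟩ y₂)


namespace HLaux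
set_option linter.unusedSectionVars false
variable (k : ℕ)

def s (d : ZMod (2 * k)) : ℤ :=
  if d = 0 ∨ d = (k : ZMod (2 * k)) then 0 else if d.val < k then 1 else -1

noncomputable def θ (d : ZMod (2 * k)) : ℝ := Real.pi * d.val / k

section
variable (hk : 2 ≤ k)
include hk

lemma nz : NeZero (2 * k) := ⟨by omega⟩
lemma valk : (k : ZMod (2 * k)).val = k := ZMod.val_cast_of_lt (by omega)

lemma kk : (k : ZMod (2 * k)) + k = 0 := by
  have : ((2 * k : ℕ) : ZMod (2 * k)) = 0 := ZMod.natCast_self _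
  push_cast at this
  linear_combination this

lemma s_eq_zero_iff (d : ZMod (2 * k)) : s k d = 0 ↔ d = 0 ∨ d = (k : ZMod (2 * k)) := by
  unfold s; split_ifs with h1 h2 <;> simp_all

lemma eq_k_iff_val (d : ZMod (2 * k)) : d = (k : ZMod (2 * k)) ↔ d.val = k := by
  haveI := nz k hk
  constructor
  · intro h; rw [h, valk k hk]
  · intro h
    have h2 : ((d.val : ℕ) : ZMod (2 * k)) = d := by simp [ZMod.natCast_val, ZMod.cast_id]
    rw [← h2, h]

lemma s_neg (d : ZMod (2 * k)) : s k (-d) = - s k d := by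
  haveI := nz k hk
  by_cases h0 : d = 0
  · simp [h0, s]
  by_cases hkk' : d = (k : ZMod (2 * k))
  · have hnk : -(k : ZMod (2 * k)) = k := by linear_combination - (kk k hk)
    simp [hkk', hnk, s]
  have hn0 : -d ≠ 0 := by simpa using h0
  have hnk : -d ≠ (k : ZMod (2 * k)) := by
    intro h
    apply hkk'
    have : d = -(k : ZMod (2 * k)) := by linear_combination -h
    rw [this]; linear_combination - (kk k hk)
  have hv : (-d).val = 2 * k - d.val := by
    rw [ZMod.neg_val, if_neg h0]
  have hd0 : d.val ≠ 0 := fun h => h0 (by rwa [← ZMod.val_eq_zero])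
  have hdk : d.val ≠ k := fun h => hkk' ((eq_k_iff_val k hk d).mpr h)
  have hdlt : d.val < 2 * k := ZMod.val_lt d
  have hL : ¬(-d = 0 ∨ -d = (k : ZMod (2 * k))) := by tauto
  have hR : ¬(d = 0 ∨ d = (k : ZMod (2 * k))) := by tauto
  unfold s
  rw [if_neg hL, if_neg hR, hv]
  by_cases h : d.val < k
  · rw [if_pos h, if_neg (by omega)]
  · rw [if_neg h, if_pos (by omega)]; norm_num

lemma val_add_k (d : ZMod (2 * k)) :
    (d + (k : ZMod (2 * k))).val = (d.val + k) % (2 * k) := by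
  haveI := nz k hk
  rw [ZMod.val_add, valk k hk]

lemma s_add_k (d : ZMod (2 * k)) : s k (d + (k : ZMod (2 * k))) = - s k d := by
  haveI := nz k hk
  have hc0 : d + (k : ZMod (2 * k)) = 0 ↔ d = (k : ZMod (2 * k)) := by
    constructor
    · intro h; linear_combination h - (kk k hk)
    · intro h; rw [h]; exact kk k hk
  have hck : d + (k : ZMod (2 * k)) = (k : ZMod (2 * k)) ↔ d = 0 := by
    constructor
    · intro h; linear_combination h
    · intro h; rw [h, zero_add]
  by_cases h0 : d = 0
  · subst h0; simp [s, hc0, hck]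
  by_cases hkk' : d = (k : ZMod (2 * k))
  · rw [hkk', kk k hk]
    have hkne : (k : ZMod (2 * k)) ≠ 0 := by
      intro hcon
      have := congrArg ZMod.val hcon
      rw [valk k hk, ZMod.val_zero] at this
      omega
    have h1 : s k (0 : ZMod (2 * k)) = 0 := by simp [s]
    have h2 : s k ((k : ZMod (2 * k))) = 0 := by simp [s]
    rw [h1, h2]; ring
  · have hd0 : d.val ≠ 0 := fun h => h0 (by rwa [← ZMod.val_eq_zero])
    have hdk : d.val ≠ k := fun h => hkk' ((eq_k_iff_val k hk d).mpr h)
    have hdlt : d.val < 2 * k := ZMod.val_lt d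
    have hv := val_add_k k hk d
    have hL : ¬(d + (k : ZMod (2 * k)) = 0 ∨ d + (k : ZMod (2 * k)) = (k : ZMod (2 * k))) := by
      rw [hc0, hck]; tauto
    have hR : ¬(d = 0 ∨ d = (k : ZMod (2 * k))) := by tauto
    have hv2 : (d + (k : ZMod (2 * k))).val = if d.val < k then d.val + k else d.val - k := by
      rw [hv]
      by_cases h : d.val < k
      · rw [if_pos h, Nat.mod_eq_of_lt (by omega)]
      · rw [if_neg h, Nat.mod_eq_sub_mod (by omega), Nat.mod_eq_of_lt (by omega)]
        omega
    unfold s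
    rw [if_neg hL, if_neg hR, hv2]
    by_cases h : d.val < k
    · simp only [if_pos h]
      rw [if_neg (by omega)]
    · simp only [if_neg h]
      rw [if_pos (by omega)]
      norm_num

lemma theta_add_k (d : ZMod (2 * k)) :
    θ k (d + (k : ZMod (2 * k))) = θ k d + Real.pi ∨
    θ k (d + (k : ZMod (2 * k))) = θ k d - Real.pi := by
  haveI := nz k hk
  have hv := val_add_k k hk d
  have hdlt : d.val < 2 * k := ZMod.val_lt d
  have hk0 : (k : ℝ) ≠ 0 := by positivity
  by_cases h : d.val < k
  · left
    unfold θ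
    rw [hv, Nat.mod_eq_of_lt (by omega)]
    push_cast
    field_simp
  · right
    unfold θ
    rw [hv, Nat.mod_eq_sub_mod (by omega), Nat.mod_eq_of_lt (by omega)]
    have : ((d.val + k - 2 * k : ℕ) : ℝ) = (d.val : ℝ) + k - 2 * k := by
      have : 2 * k ≤ d.val + k := by omega
      push_cast [Nat.cast_sub this]
      ring
    rw [this]
    field_simp
    ring

lemma sin_shift (d e : ZMod (2 * k)) :
    Real.sin (θ k (d + (k : ZMod (2 * k))) - θ k e) = - Real.sin (θ k d - θ k e) := by
  rcases theta_add_k k hk d with h | h <;> rw [h]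
  · rw [show θ k d + Real.pi - θ k e = (θ k d - θ k e) + Real.pi by ring, Real.sin_add_pi]
  · rw [show θ k d - Real.pi - θ k e = (θ k d - θ k e) - Real.pi by ring, Real.sin_sub_pi]

lemma plucker (a b c d : ℝ) :
    Real.sin (b - a) * Real.sin (d - c) =
      Real.sin (c - a) * Real.sin (d - b) + Real.sin (d - a) * Real.sin (b - c) := by
  simp only [Real.sin_sub]
  ring

lemma tri (d e : ZMod (2 * k)) :
    (s k (e - d) = 0 ∧ Real.sin (θ k e - θ k d) = 0) ∨
    (s k (e - d) = 1 ∧ 0 < Real.sin (θ k e - θ k d)) ∨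
    (s k (e - d) = -1 ∧ Real.sin (θ k e - θ k d) < 0) := by
  haveI := nz k hk
  have hπ := Real.pi_pos
  set m : ℕ := (e - d).val with hm
  have hdvd : ((2 * k : ℕ) : ℤ) ∣ ((m : ℤ) - ((e.val : ℤ) - (d.val : ℤ))) := by
    rw [← ZMod.intCast_zmod_eq_zero_iff_dvd]
    push_cast [ZMod.natCast_val, ZMod.cast_id]
    rw [hm]
    push_cast [ZMod.natCast_val, ZMod.cast_id]
    ring
  obtain ⟨t, ht⟩ := hdvd
  have hk0 : (k : ℝ) ≠ 0 := by positivity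
  have hmr : (m : ℝ) = ((e.val : ℝ) - d.val) + (2 * k) * t := by
    exact_mod_cast congrArg (fun z : ℤ => (z : ℝ))
      (by linarith [ht] : (m : ℤ) = ((e.val : ℤ) - (d.val : ℤ)) + ((2 * k : ℕ) : ℤ) * t)
  have hsin : Real.sin (θ k e - θ k d) = Real.sin (Real.pi * m / k) := by
    have harg : (Real.pi * m / k) = (θ k e - θ k d) + t * (2 * Real.pi) := by
      unfold θ
      field_simp
      rw [hmr]
      push_cast [ZMod.natCast_val]
      ring
    rw [harg, Real.sin_add_int_mul_two_pi]
  rw [hsin]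
  have hmlt : m < 2 * k := ZMod.val_lt _
  have hzero : (e - d = 0) ↔ m = 0 := by rw [hm, ZMod.val_eq_zero]
  have hkeq : (e - d = (k : ZMod (2 * k))) ↔ m = k := by
    constructor
    · intro h; rw [hm, h, valk k hk]
    · intro h
      have h2 : ((m : ℕ) : ZMod (2 * k)) = e - d := by
        rw [hm]; simp [ZMod.natCast_val, ZMod.cast_id]
      rw [← h2, h]
  rcases Nat.lt_trichotomy m k with hlt | heq | hgt
  · rcases Nat.eq_zero_or_pos m with h0 | h0
    · left
      refine ⟨(s_eq_zero_iff k hk _).mpr (Or.inl (hzero.mpr h0)), by simp [h0]⟩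
    · right; left
      constructor
      · unfold s
        rw [if_neg, if_pos hlt]
        rw [hzero, hkeq]; omega
      · apply Real.sin_pos_of_pos_of_lt_pi
        · positivity
        · rw [div_lt_iff₀ (by positivity)]
          have : (m : ℝ) < k := by exact_mod_cast hlt
          nlinarith
  · left
    constructor
    · exact (s_eq_zero_iff k hk _).mpr (Or.inr (hkeq.mpr heq))
    · rw [heq]
      rw [mul_div_assoc, div_self hk0, mul_one, Real.sin_pi]
  · right; right
    constructor
    · unfold s
      rw [if_neg, if_neg (by omega)]
      rw [hzero, hkeq]; omega
    · have hrw : Real.sin (Real.pi * m / k) = - Real.sin (Real.pi * m / k - Real.pi) := by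
        rw [← Real.sin_add_pi]; ring_nf
      have hpos : 0 < Real.sin (Real.pi * m / k - Real.pi) := by
        apply Real.sin_pos_of_pos_of_lt_pi
        · rw [sub_pos, lt_div_iff₀ (by positivity)]
          have : (k : ℝ) < m := by exact_mod_cast hgt
          nlinarith
        · rw [sub_lt_iff_lt_add, div_lt_iff₀ (by positivity)]
          have : (m : ℝ) < 2 * k := by exact_mod_cast hmlt
          nlinarith
      rw [hrw]; linarith

lemma prod_iff (d e d' e' : ZMod (2 * k)) :
    0 ≤ s k (e - d) * s k (e' - d') ↔
    0 ≤ Real.sin (θ k e - θ k d) * Real.sin (θ k e' - θ k d') := by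
  rcases tri k hk d e with ⟨h1, h2⟩ | ⟨h1, h2⟩ | ⟨h1, h2⟩ <;>
    rcases tri k hk d' e' with ⟨h3, h4⟩ | ⟨h3, h4⟩ | ⟨h3, h4⟩ <;>
    rw [h1, h3] <;>
    constructor <;> intro h <;> nlinarith


lemma s_one_ne : s k (1 : ZMod (2 * k)) ≠ 0 ∧ s k ((1 : ZMod (2 * k)) + k) ≠ 0 := by
  haveI := nz k hk
  have hval1 : (1 : ZMod (2 * k)).val = 1 := by
    have : ((1 : ℕ) : ZMod (2 * k)).val = 1 := ZMod.val_cast_of_lt (by omega)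
    simpa using this
  have hval1k : ((1 : ZMod (2 * k)) + k).val = 1 + k := by
    rw [val_add_k k hk, hval1, Nat.mod_eq_of_lt (by omega)]
  constructor
  · intro h
    rw [s_eq_zero_iff k hk] at h
    rcases h with h | h
    · have h2 := congrArg ZMod.val h; rw [hval1, ZMod.val_zero] at h2; omega
    · have h2 := congrArg ZMod.val h; rw [hval1, valk k hk] at h2; omega
  · intro h
    rw [s_eq_zero_iff k hk] at h
    rcases h with h | h
    · have h2 := congrArg ZMod.val h; rw [hval1k, ZMod.val_zero] at h2; omega
    · have h2 := congrArg ZMod.val h; rw [hval1k, valk k hk] at h2; omega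

end
end HLaux

/-- a hyperline sequence of rank 2 over `E` with period length `2k`
(encoded by the position map `pos : E ∪ Ē → C_{2k}` sending each signed index to the
atom containing it, with `pos(x̄) = pos(x) + k` and every atom nonempty) induces a
rank-2 chirotope: `χ([x₁,x₂]) = +1` if the cyclic order is `(x₁,x₂,x̄₁,x̄₂)`,
`-1` if it is `(x₂,x₁,x̄₂,x̄₁)`, and `0` if `x₁*`, `x₂*` meet a common atom. -/
theorem hyperline_rank_two_isChirotope {α : Type*} [DecidableEq α]
    (k : ℕ) (hk : 2 ≤ k)
    (pos : α × Bool → ZMod (2 * k))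
    (hbar : ∀ x, pos (bar x) = pos x + (k : ZMod (2 * k)))
    (hsurj : Function.Surjective pos) :
    IsChirotope 2 α (fun σ : Fin 2 → α × Bool =>
      if (σ 0).1 = (σ 1).1 then 0
      else if pos (σ 1) = pos (σ 0) ∨ pos (σ 1) = pos (σ 0) + (k : ZMod (2 * k)) then 0
      else if (pos (σ 1) - pos (σ 0)).val < k then 1 else -1) := by
  haveI := HLaux.nz k hk
  have hsame : ∀ x y : α × Bool, x.1 = y.1 → HLaux.s k (pos y - pos x) = 0 := by
    intro x y hxy
    have hcase : y = x ∨ y = bar x := by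
      by_cases hb : y.2 = x.2
      · left; exact Prod.ext hxy.symm hb
      · right
        refine Prod.ext hxy.symm ?_
        show y.2 = !x.2
        cases hx2 : x.2 <;> cases hy2 : y.2 <;> simp_all
    rw [HLaux.s_eq_zero_iff k hk]
    rcases hcase with h | h
    · left; rw [h]; ring
    · right; rw [h, hbar]; ring
  have hχ : ∀ x y : α × Bool,
      (if x.1 = y.1 then (0 : ℤ)
       else if pos y = pos x ∨ pos y = pos x + (k : ZMod (2 * k)) then 0
       else if (pos y - pos x).val < k then 1 else -1)
      = HLaux.s k (pos y - pos x) := by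
    intro x y
    by_cases h1 : x.1 = y.1
    · rw [if_pos h1, eq_comm]
      exact hsame _ _ h1
    · rw [if_neg h1]
      unfold HLaux.s
      refine (if_congr ?_ rfl rfl)
      constructor
      · rintro (h | h)
        · left; rw [h]; ring
        · right; rw [h]; ring
      · rintro (h | h)
        · left; linear_combination h
        · right; linear_combination h
  refine
    { rpos := by norm_num
      values := ?_
      degenerate := ?_
      c1 := ?_
      c2neg := ?_
      c2swap := ?_
      c3 := ?_
      c4 := ?_ }
  · intro σ
    simp only [hχ]
    unfold HLaux.s
    split_ifs <;> simp
  · intro σ h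
    rw [Function.not_injective_iff] at h
    obtain ⟨i, j, hij, hne⟩ := h
    have h01 : (σ 0).1 = (σ 1).1 := by
      fin_cases i <;> fin_cases j <;>
        first
          | exact absurd rfl hne
          | exact hij
          | exact hij.symm
    simp only [hχ]
    exact hsame _ _ h01
  · intro e
    obtain ⟨x, hx⟩ := hsurj (pos (e, true) + 1)
    refine ⟨![e, x.1], ⟨0, rfl⟩, ?_⟩
    have hq : pos (x.1, true) = pos (e, true) + 1 ∨
        pos (x.1, true) = pos (e, true) + 1 + k := by
      cases hb : x.2
      · right
        have hbx : bar x = (x.1, true) := by simp [bar, hb]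
        have h2 := hbar x
        rw [hbx, hx] at h2
        exact h2
      · left
        have hxe : (x.1, true) = x := by rw [← hb]
        rw [hxe, hx]
    have hone := HLaux.s_one_ne k hk
    refine ne_of_eq_of_ne (hχ (e, true) (x.1, true)) ?_
    rcases hq with h | h
    · rw [show pos (x.1, true) - pos (e, true) = 1 from by rw [h]; ring]
      exact hone.1
    · rw [show pos (x.1, true) - pos (e, true) = 1 + (k : ZMod (2 * k)) from by rw [h]; ring]
      exact hone.2
  · intro σ i hi
    have hi1 : i = (1 : Fin 2) := by
      apply Fin.ext
      simp only [Fin.val_one]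
      simpa using hi
    subst hi1
    simp only [hχ]
    have e0 : Function.update σ (1 : Fin 2) (bar (σ 1)) 0 = σ 0 :=
      Function.update_of_ne (by decide) _ _
    have e1 : Function.update σ (1 : Fin 2) (bar (σ 1)) 1 = bar (σ 1) :=
      Function.update_self _ _ _
    rw [e0, e1, hbar,
      show pos (σ 1) + (k : ZMod (2 * k)) - pos (σ 0)
        = (pos (σ 1) - pos (σ 0)) + k by ring]
    exact HLaux.s_add_k k hk _
  · intro σ i j hj
    have hjlt := j.isLt
    have hi0 : i = (0 : Fin 2) := by
      apply Fin.ext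
      simp only [Fin.val_zero]
      omega
    have hj1 : j = (1 : Fin 2) := by
      apply Fin.ext
      simp only [Fin.val_one]
      omega
    subst hi0; subst hj1
    have hfun : (fun m : Fin 2 => if m = 0 then bar (σ 1) else if m = 1 then σ 0 else σ m)
        = ![bar (σ 1), σ 0] := by
      funext m
      fin_cases m <;> simp
    rw [hfun]
    simp only [hχ]
    simp only [Matrix.cons_val_one, Matrix.head_cons, Matrix.cons_val_zero]
    rw [hbar,
      show pos (σ 0) - (pos (σ 1) + (k : ZMod (2 * k)))
        = -((pos (σ 1) - pos (σ 0)) + k) by ring,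
      HLaux.s_neg k hk, HLaux.s_add_k k hk]
    ring
  · intro σ τ hσ hτ
    simp only [hχ] at hσ hτ ⊢
    by_contra hcon
    push_neg at hcon
    have h0 := hcon 0
    have h1 := hcon 1
    have e0 : ∀ y : α × Bool,
        Function.update σ (⟨2 - 1, Nat.sub_lt two_pos one_pos⟩ : Fin 2) y 0 = σ 0 := by
      intro y
      exact Function.update_of_ne (by decide) _ _
    have e1 : ∀ y : α × Bool,
        Function.update σ (⟨2 - 1, Nat.sub_lt two_pos one_pos⟩ : Fin 2) y 1 = y := by
      intro y
      exact Function.update_self _ _ _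
    rw [e0, e1, HLaux.s_eq_zero_iff k hk] at h0 h1
    apply hτ
    rw [HLaux.s_eq_zero_iff k hk]
    have hkk := HLaux.kk k hk
    rcases h0 with h0 | h0 <;> rcases h1 with h1 | h1
    · left; linear_combination h1 - h0
    · right; linear_combination h1 - h0
    · right; linear_combination h1 - h0 - hkk
    · left; linear_combination h1 - h0
  · intro σ y₁ y₂ h1 h2
    simp only [hχ] at h1 h2 ⊢
    have ea0 : ∀ y : α × Bool,
        Function.update σ (⟨2 - 2, Nat.sub_lt two_pos two_pos⟩ : Fin 2) y 0 = y := by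
      intro y; exact Function.update_self _ _ _
    have ea1 : ∀ y : α × Bool,
        Function.update σ (⟨2 - 2, Nat.sub_lt two_pos two_pos⟩ : Fin 2) y 1 = σ 1 := by
      intro y; exact Function.update_of_ne (by decide) _ _
    have eb0 : ∀ (f : Fin 2 → α × Bool) (y : α × Bool),
        Function.update f (⟨2 - 1, Nat.sub_lt two_pos one_pos⟩ : Fin 2) y 0 = f 0 := by
      intro f y; exact Function.update_of_ne (by decide) _ _
    have eb1 : ∀ (f : Fin 2 → α × Bool) (y : α × Bool),
        Function.update f (⟨2 - 1, Nat.sub_lt two_pos one_pos⟩ : Fin 2) y 1 = y := by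
      intro f y; exact Function.update_self _ _ _
    rw [ea0, ea1, eb0, eb1] at h1
    rw [ea0, ea1, eb0, eb1, hbar] at h2
    rw [eb0, eb1, ea0]
    rw [HLaux.prod_iff k hk] at h1 h2 ⊢
    rw [HLaux.sin_shift k hk] at h2
    have hid := HLaux.plucker k hk (HLaux.θ k (pos (σ 0))) (HLaux.θ k (pos (σ 1)))
      (HLaux.θ k (pos y₁)) (HLaux.θ k (pos y₂))
    have h3 : Real.sin (HLaux.θ k (pos y₂) - HLaux.θ k (pos (σ 1)))
        = - Real.sin (HLaux.θ k (pos (σ 1)) - HLaux.θ k (pos y₂)) := by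
      rw [show HLaux.θ k (pos y₂) - HLaux.θ k (pos (σ 1))
        = -(HLaux.θ k (pos (σ 1)) - HLaux.θ k (pos y₂)) by ring, Real.sin_neg]
    rw [h3] at hid
    nlinarith [h1, h2, hid]
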